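/- Linear combination of block-encoded matrices: if each A_j is (alpha_j, a, epsilon_j)-block-encoded by a unitary U_j, and (P_L, P_R) is a state-preparation pair on b qubits with amplitudes c_j, d_j satisfying sum_j |y_j alpha_j - beta_tilde * conj(c_j) d_j| <= delta (with beta_tilde = sum_j |y_j alpha_j| and conj(c_j) d_j = 0 for j >= m), then the unitary (P_L^dagger ⊗ I)(sum_j |j><j| ⊗ U_j + rest ⊗ I)(P_R ⊗ I) is a (beta_tilde, a+b, delta + sum_j |y_j| epsilon_j)-block-encoding of A = sum_j y_j A_j. -/

import Mathlib

open scoped Kronecker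

/-- The ℓ²-operator norm of a complex matrix (as a map on Euclidean space). -/
noncomputable def opNorm {ι : Type*} [Fintype ι] [DecidableEq ι] (M : Matrix ι ι ℂ) : ℝ :=
  ‖Matrix.toEuclideanCLM (𝕜 := ℂ) M‖

/-- The upper-left corner `(⟨0|^{⊗a} ⊗ I) U (|0⟩^{⊗a} ⊗ I)` of a unitary on ancilla × system,
with distinguished ancilla basis state `z`. -/
noncomputable def corner {α ι : Type*} [Fintype α] [Fintype ι] [DecidableEq α] [DecidableEq ι]
    (z : α) (U : Matrix (α × ι) (α × ι) ℂ) : Matrix ι ι ℂ :=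
  Matrix.of fun i j => U (z, i) (z, j)

/-- `U` is an `(a, e)`-block-encoding of `A`: `U` is unitary and
`‖A - a · (⟨0| ⊗ I) U (|0⟩ ⊗ I)‖ ≤ e` in ℓ²-operator norm. -/
def IsBlockEncoding {α ι : Type*} [Fintype α] [Fintype ι] [DecidableEq α] [DecidableEq ι]
    (z : α) (U : Matrix (α × ι) (α × ι) ℂ) (A : Matrix ι ι ℂ) (a e : ℝ) : Prop :=
  U ∈ Matrix.unitaryGroup (α × ι) ℂ ∧ opNorm (A - (a : ℂ) • corner z U) ≤ e

section Aux

open scoped Matrix.Norms.L2Operator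
open Matrix

lemma opNorm_eq {ι : Type*} [Fintype ι] [DecidableEq ι] (M : Matrix ι ι ℂ) :
    opNorm M = ‖M‖ := rfl

lemma norm_one_matrix {ι : Type*} [Fintype ι] [DecidableEq ι] [Nonempty ι] :
    ‖(1 : Matrix ι ι ℂ)‖ = 1 := by
  rw [Matrix.cstar_norm_def, _root_.map_one]
  exact ContinuousLinearMap.norm_id

lemma corner_norm_le {α ι : Type*} [Fintype α] [Fintype ι] [DecidableEq α] [DecidableEq ι]
    [Nonempty ι] (z : α) (U : Matrix (α × ι) (α × ι) ℂ) :
    ‖corner z U‖ ≤ ‖U‖ := by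
  classical
  set E : Matrix (α × ι) ι ℂ := Matrix.of fun p j => if p = (z, j) then 1 else 0 with hE
  have hEE : Eᴴ * E = 1 := by
    ext i j
    simp only [Matrix.mul_apply, Matrix.conjTranspose_apply, hE, Matrix.of_apply, Matrix.one_apply]
    rw [Fintype.sum_prod_type]
    simp only [Prod.ext_iff, apply_ite (starRingEnd ℂ), _root_.map_one, _root_.map_zero, ite_and]
    simp [Finset.sum_ite_eq, eq_comm]
  have hcorner : corner z U = Eᴴ * U * E := by
    ext i j
    simp only [Matrix.mul_apply, Matrix.conjTranspose_apply, hE, Matrix.of_apply, corner]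
    simp [Finset.sum_ite_eq', apply_ite (starRingEnd ℂ), mul_comm]
  have hEnorm : ‖E‖ = 1 := by
    have h2 : ‖E‖ * ‖E‖ = 1 := by
      rw [← Matrix.l2_opNorm_conjTranspose_mul_self, hEE, norm_one_matrix]
    nlinarith [norm_nonneg E]
  calc ‖corner z U‖ = ‖Eᴴ * U * E‖ := by rw [hcorner]
    _ ≤ ‖Eᴴ * U‖ * ‖E‖ := Matrix.l2_opNorm_mul _ _
    _ ≤ ‖Eᴴ‖ * ‖U‖ * ‖E‖ :=
        mul_le_mul_of_nonneg_right (Matrix.l2_opNorm_mul _ _) (norm_nonneg E)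
    _ = ‖U‖ := by rw [Matrix.l2_opNorm_conjTranspose, hEnorm]; ring

lemma corner_norm_le_one {α ι : Type*} [Fintype α] [Fintype ι] [DecidableEq α] [DecidableEq ι]
    [Nonempty ι] [Nonempty α] (z : α) (U : Matrix (α × ι) (α × ι) ℂ)
    (hU : U ∈ Matrix.unitaryGroup (α × ι) ℂ) : ‖corner z U‖ ≤ 1 := by
  have := corner_norm_le z U
  rwa [CStarRing.norm_of_mem_unitary hU] at this

lemma kron_conjT {β γ : Type*} [Fintype β] [Fintype γ] (P : Matrix β β ℂ) (Q : Matrix γ γ ℂ) :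
    (P ⊗ₖ Q)ᴴ = Pᴴ ⊗ₖ Qᴴ := by
  ext ⟨x1, x2⟩ ⟨y1, y2⟩
  simp [Matrix.conjTranspose_apply, Matrix.kroneckerMap_apply]

lemma kron_one_unitary {β γ : Type*} [Fintype β] [Fintype γ] [DecidableEq β] [DecidableEq γ]
    {P : Matrix β β ℂ} (hP : P ∈ Matrix.unitaryGroup β ℂ) :
    (P ⊗ₖ (1 : Matrix γ γ ℂ)) ∈ Matrix.unitaryGroup (β × γ) ℂ := by
  rw [Matrix.mem_unitaryGroup_iff']
  rw [Matrix.star_eq_conjTranspose, kron_conjT, ← Matrix.mul_kronecker_mul]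
  rw [Matrix.conjTranspose_one, one_mul]
  have : Pᴴ * P = 1 := Matrix.mem_unitaryGroup_iff'.mp hP
  rw [this, Matrix.one_kronecker_one]

lemma blockdiag_unitary {β γ : Type*} [Fintype β] [Fintype γ] [DecidableEq β] [DecidableEq γ]
    (W : β → Matrix γ γ ℂ) (hW : ∀ k, W k ∈ Matrix.unitaryGroup γ ℂ) :
    (Matrix.of fun p q : β × γ => if p.1 = q.1 then W p.1 p.2 q.2 else 0) ∈
      Matrix.unitaryGroup (β × γ) ℂ := by
  have key : (Matrix.of fun p q : β × γ => if p.1 = q.1 then W p.1 p.2 q.2 else 0) =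
      (Matrix.blockDiagonal W).submatrix (Equiv.prodComm β γ) (Equiv.prodComm β γ) := by
    ext ⟨k, s⟩ ⟨l, t⟩
    simp [Matrix.blockDiagonal_apply, Matrix.submatrix_apply, eq_comm]
  rw [key, Matrix.mem_unitaryGroup_iff']
  rw [Matrix.star_eq_conjTranspose, Matrix.conjTranspose_submatrix,
    Matrix.blockDiagonal_conjTranspose, Matrix.submatrix_mul_equiv,
    ← Matrix.blockDiagonal_mul]
  have : (fun k => (W k)ᴴ * W k) = fun _ => (1 : Matrix γ γ ℂ) := by
    funext k
    exact Matrix.mem_unitaryGroup_iff'.mp (hW k)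
  rw [this]
  rw [show (Matrix.blockDiagonal fun _ : β => (1 : Matrix γ γ ℂ)) = 1 from Matrix.blockDiagonal_one]
  exact Matrix.submatrix_one_equiv _

lemma reindex_unitary {β γ : Type*} [Fintype β] [Fintype γ] [DecidableEq β] [DecidableEq γ]
    (e : β ≃ γ) {M : Matrix β β ℂ} (hM : M ∈ Matrix.unitaryGroup β ℂ) :
    Matrix.reindex e e M ∈ Matrix.unitaryGroup γ ℂ := by
  rw [Matrix.mem_unitaryGroup_iff']
  rw [Matrix.reindex_apply, Matrix.star_eq_conjTranspose, Matrix.conjTranspose_submatrix,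
    Matrix.submatrix_mul_equiv, ← Matrix.star_eq_conjTranspose, hM.1,
    Matrix.submatrix_one_equiv]

lemma corner_lcu {β α ι : Type*} [Fintype β] [Fintype α] [Fintype ι]
    [DecidableEq β] [DecidableEq α] [DecidableEq ι]
    (PL PR : Matrix β β ℂ) (W : β → Matrix (α × ι) (α × ι) ℂ) (z0 : β) (z : α) :
    corner (z0, z)
      (Matrix.reindex (Equiv.prodAssoc β α ι).symm (Equiv.prodAssoc β α ι).symm
        ((PLᴴ ⊗ₖ (1 : Matrix (α × ι) (α × ι) ℂ)) *
          (Matrix.of fun p q : β × (α × ι) => if p.1 = q.1 then W p.1 p.2 q.2 else 0) *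
          (PR ⊗ₖ (1 : Matrix (α × ι) (α × ι) ℂ))))
      = ∑ k, ((starRingEnd ℂ) (PL k z0) * PR k z0) • corner z (W k) := by
  ext i j
  show ((PLᴴ ⊗ₖ (1 : Matrix (α × ι) (α × ι) ℂ)) *
          (Matrix.of fun p q : β × (α × ι) => if p.1 = q.1 then W p.1 p.2 q.2 else 0) *
          (PR ⊗ₖ (1 : Matrix (α × ι) (α × ι) ℂ))) (z0, (z, i)) (z0, (z, j)) = _
  simp only [Matrix.mul_apply, Matrix.kroneckerMap_apply, Matrix.of_apply, Matrix.one_apply,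
    Matrix.conjTranspose_apply, Fintype.sum_prod_type, Finset.sum_mul, Finset.mul_sum,
    ite_mul, mul_ite, zero_mul, mul_zero, Finset.sum_ite_irrel, Finset.sum_const_zero,
    Finset.sum_ite_eq, Finset.sum_ite_eq', Finset.mem_univ, if_true]
  rw [Matrix.sum_apply]
  refine Finset.sum_congr rfl fun k _ => ?_
  simp only [Matrix.smul_apply, corner, Matrix.of_apply, smul_eq_mul, RCLike.star_def]
  ring

end Aux

section Main

open scoped Matrix.Norms.L2Operator
open Matrix

/-- Linear combination of block-encoded matrices: if each `A j` (for `j < m`) is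
`(α j, a, ε j)`-block-encoded by `U j`, and `(P_L, P_R)` is a state-preparation pair on
`b` qubits with `P_L |0⟩ = ∑ j, c j |j⟩`, `P_R |0⟩ = ∑ j, d j |j⟩`, such that
`∑_{j<m} |y j · α j - β̃ · conj (c j) · d j| ≤ δ` (with `β̃ = ∑_{j<m} |y j · α j|`) and
`conj (c j) · d j = 0` for `j ≥ m`, then
`(P_L† ⊗ I)(∑_{j<m} |j⟩⟨j| ⊗ U j + ∑_{j≥m} |j⟩⟨j| ⊗ I)(P_R ⊗ I)`
is a `(β̃, a + b, δ + ∑_{j<m} |y j| ε j)`-block-encoding of `A = ∑_{j<m} y j • A j`. -/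
theorem linear_combination_of_block_encodings (m a b n : ℕ) (hm : m ≤ 2 ^ b)
    (U : Fin (2 ^ b) → Matrix (Fin (2 ^ a) × Fin (2 ^ n)) (Fin (2 ^ a) × Fin (2 ^ n)) ℂ)
    (A : Fin (2 ^ b) → Matrix (Fin (2 ^ n)) (Fin (2 ^ n)) ℂ)
    (y c d : Fin (2 ^ b) → ℂ) (α ε : Fin (2 ^ b) → ℝ) (δ βt : ℝ)
    (PL PR : Matrix (Fin (2 ^ b)) (Fin (2 ^ b)) ℂ)
    (hPL : PL ∈ Matrix.unitaryGroup (Fin (2 ^ b)) ℂ)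
    (hPR : PR ∈ Matrix.unitaryGroup (Fin (2 ^ b)) ℂ)
    (hc : ∀ j, PL j 0 = c j) (hd : ∀ j, PR j 0 = d j)
    (hBE : ∀ j : Fin (2 ^ b), (j : ℕ) < m → IsBlockEncoding (0 : Fin (2 ^ a)) (U j) (A j) (α j) (ε j))
    (hzero : ∀ j : Fin (2 ^ b), m ≤ (j : ℕ) → (starRingEnd ℂ) (c j) * d j = 0)
    (hβ : βt = ∑ j ∈ Finset.univ.filter (fun j : Fin (2 ^ b) => (j : ℕ) < m),
        ‖y j * (α j : ℂ)‖)
    (hδ : (∑ j ∈ Finset.univ.filter (fun j : Fin (2 ^ b) => (j : ℕ) < m),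
        ‖y j * (α j : ℂ) - (βt : ℂ) * ((starRingEnd ℂ) (c j) * d j)‖) ≤ δ) :
    IsBlockEncoding ((0 : Fin (2 ^ b)), (0 : Fin (2 ^ a)))
      (Matrix.reindex (Equiv.prodAssoc (Fin (2 ^ b)) (Fin (2 ^ a)) (Fin (2 ^ n))).symm
        (Equiv.prodAssoc (Fin (2 ^ b)) (Fin (2 ^ a)) (Fin (2 ^ n))).symm
        ((PL.conjTranspose ⊗ₖ (1 : Matrix (Fin (2 ^ a) × Fin (2 ^ n)) (Fin (2 ^ a) × Fin (2 ^ n)) ℂ)) *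
          (Matrix.of fun p q : Fin (2 ^ b) × (Fin (2 ^ a) × Fin (2 ^ n)) =>
            if p.1 = q.1 then
              (if (p.1 : ℕ) < m then U p.1 p.2 q.2 else if p.2 = q.2 then 1 else 0)
            else 0) *
          (PR ⊗ₖ (1 : Matrix (Fin (2 ^ a) × Fin (2 ^ n)) (Fin (2 ^ a) × Fin (2 ^ n)) ℂ))))
      (∑ j ∈ Finset.univ.filter (fun j : Fin (2 ^ b) => (j : ℕ) < m), y j • A j)
      βt
      (δ + ∑ j ∈ Finset.univ.filter (fun j : Fin (2 ^ b) => (j : ℕ) < m),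
        ‖y j‖ * ε j) := by
  classical
  have h2b : 0 < 2 ^ b := Nat.pow_pos (by norm_num)
  haveI : Nonempty (Fin (2 ^ n)) := ⟨⟨0, Nat.pow_pos (by norm_num)⟩⟩
  haveI : Nonempty (Fin (2 ^ a)) := ⟨⟨0, Nat.pow_pos (by norm_num)⟩⟩
  haveI : Nonempty (Fin (2 ^ b)) := ⟨⟨0, h2b⟩⟩
  set S := Finset.univ.filter (fun j : Fin (2 ^ b) => (j : ℕ) < m) with hS
  set W : Fin (2 ^ b) → Matrix (Fin (2 ^ a) × Fin (2 ^ n)) (Fin (2 ^ a) × Fin (2 ^ n)) ℂ :=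
    fun k => if (k : ℕ) < m then U k else 1 with hWdef
  have hWu : ∀ k, W k ∈ Matrix.unitaryGroup (Fin (2 ^ a) × Fin (2 ^ n)) ℂ := by
    intro k
    by_cases h : (k : ℕ) < m
    · simpa [hWdef, h] using (hBE k h).1
    · simp only [hWdef, h, if_false]
      exact one_mem _
  have hMid : (Matrix.of fun p q : Fin (2 ^ b) × (Fin (2 ^ a) × Fin (2 ^ n)) =>
      if p.1 = q.1 then
        (if (p.1 : ℕ) < m then U p.1 p.2 q.2 else if p.2 = q.2 then 1 else 0)
      else 0)
      = Matrix.of fun p q : Fin (2 ^ b) × (Fin (2 ^ a) × Fin (2 ^ n)) =>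
          if p.1 = q.1 then W p.1 p.2 q.2 else 0 := by
    ext ⟨p1, p2⟩ ⟨q1, q2⟩
    by_cases h : (p1 : ℕ) < m <;> simp [hWdef, h, Matrix.one_apply]
  have hPLH : PLᴴ ∈ Matrix.unitaryGroup (Fin (2 ^ b)) ℂ := by
    rw [← Matrix.star_eq_conjTranspose]
    exact Unitary.star_mem hPL
  rw [hMid]
  constructor
  · exact reindex_unitary _
      (mul_mem (mul_mem (kron_one_unitary hPLH) (blockdiag_unitary W hWu))
        (kron_one_unitary hPR))
  · -- the norm bound
    rw [corner_lcu PL PR W 0 0]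
    have hsum : (∑ k, ((starRingEnd ℂ) (PL k 0) * PR k 0) • corner 0 (W k))
        = ∑ k ∈ S, ((starRingEnd ℂ) (c k) * d k) • corner 0 (U k) := by
      rw [← Finset.sum_filter_add_sum_filter_not Finset.univ (fun k : Fin (2 ^ b) => (k : ℕ) < m)]
      have h2 : (∑ k ∈ Finset.univ.filter (fun k : Fin (2 ^ b) => ¬ (k : ℕ) < m),
          ((starRingEnd ℂ) (PL k 0) * PR k 0) • corner 0 (W k)) = 0 := by
        refine Finset.sum_eq_zero fun k hk => ?_
        have hk' : m ≤ (k : ℕ) := Nat.le_of_not_lt (Finset.mem_filter.mp hk).2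
        rw [hc, hd, hzero k hk', zero_smul]
      rw [h2, add_zero]
      refine Finset.sum_congr rfl fun k hk => ?_
      have hkm : (k : ℕ) < m := (Finset.mem_filter.mp hk).2
      rw [hc, hd]
      congr 1
      simp [hWdef, hkm]
    rw [hsum]
    set G : Fin (2 ^ b) → Matrix (Fin (2 ^ n)) (Fin (2 ^ n)) ℂ := fun k => corner 0 (U k) with hG
    have hsplit : (∑ j ∈ S, y j • A j) - (βt : ℂ) •
          ∑ k ∈ S, ((starRingEnd ℂ) (c k) * d k) • G k
        = ∑ k ∈ S, (y k • (A k - (α k : ℂ) • G k)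
            + (y k * (α k : ℂ) - (βt : ℂ) * ((starRingEnd ℂ) (c k) * d k)) • G k) := by
      rw [Finset.smul_sum, ← Finset.sum_sub_distrib]
      refine Finset.sum_congr rfl fun k _ => ?_
      rw [smul_smul]
      module
    rw [opNorm_eq, hsplit]
    calc ‖∑ k ∈ S, (y k • (A k - (α k : ℂ) • G k)
            + (y k * (α k : ℂ) - (βt : ℂ) * ((starRingEnd ℂ) (c k) * d k)) • G k)‖
        ≤ ∑ k ∈ S, ‖y k • (A k - (α k : ℂ) • G k)
            + (y k * (α k : ℂ) - (βt : ℂ) * ((starRingEnd ℂ) (c k) * d k)) • G k‖ :=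
          norm_sum_le _ _
      _ ≤ ∑ k ∈ S, (‖y k‖ * ε k
            + ‖y k * (α k : ℂ) - (βt : ℂ) * ((starRingEnd ℂ) (c k) * d k)‖) := by
          refine Finset.sum_le_sum fun k hk => ?_
          have hkm : (k : ℕ) < m := (Finset.mem_filter.mp hk).2
          have h1 : ‖A k - (α k : ℂ) • G k‖ ≤ ε k := by
            have := (hBE k hkm).2
            rwa [opNorm_eq] at this
          have h2 : ‖G k‖ ≤ 1 := corner_norm_le_one _ _ (hBE k hkm).1
          calc ‖y k • (A k - (α k : ℂ) • G k)
                + (y k * (α k : ℂ) - (βt : ℂ) * ((starRingEnd ℂ) (c k) * d k)) • G k‖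
              ≤ ‖y k • (A k - (α k : ℂ) • G k)‖
                + ‖(y k * (α k : ℂ) - (βt : ℂ) * ((starRingEnd ℂ) (c k) * d k)) • G k‖ :=
                norm_add_le _ _
            _ = ‖y k‖ * ‖A k - (α k : ℂ) • G k‖
                + ‖y k * (α k : ℂ) - (βt : ℂ) * ((starRingEnd ℂ) (c k) * d k)‖ * ‖G k‖ := by
                rw [norm_smul, norm_smul]
            _ ≤ ‖y k‖ * ε k
                + ‖y k * (α k : ℂ) - (βt : ℂ) * ((starRingEnd ℂ) (c k) * d k)‖ * 1 :=
                add_le_add (mul_le_mul_of_nonneg_left h1 (norm_nonneg _))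
                  (mul_le_mul_of_nonneg_left h2 (norm_nonneg _))
            _ = ‖y k‖ * ε k
                + ‖y k * (α k : ℂ) - (βt : ℂ) * ((starRingEnd ℂ) (c k) * d k)‖ := by
                rw [mul_one]
      _ = (∑ k ∈ S, ‖y k‖ * ε k)
            + ∑ k ∈ S, ‖y k * (α k : ℂ) - (βt : ℂ) * ((starRingEnd ℂ) (c k) * d k)‖ :=
          Finset.sum_add_distrib
      _ ≤ (∑ k ∈ S, ‖y k‖ * ε k) + δ := add_le_add_right hδ _
      _ = δ + ∑ k ∈ S, ‖y k‖ * ε k := add_comm _ _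

end Main
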